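/- For probability distributions π and π' over a finite set A, if π(a) ∝ exp(Q(a)) and π'(a) ∝ exp(Q'(a)) for functions Q, Q' : A → ℝ, then ‖π - π'‖₁ ≤ 2·√(‖Q - Q'‖_∞), where ‖π - π'‖₁ = Σ_a |π(a) - π'(a)| and ‖Q - Q'‖_∞ = sup_a |Q(a) - Q'(a)|. -/
import Mathlib

open Finset

lemma softmax_one_sided {A : Type*} [Fintype A] [Nonempty A] (Q Q' : A → ℝ) (ε : ℝ)
    (hle : ∀ a, |Q a - Q' a| ≤ ε)
    (hSS : (∑ a', Real.exp (Q a')) ≤ (∑ a', Real.exp (Q' a'))) :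
    ∑ a, max (Real.exp (Q' a) / (∑ a', Real.exp (Q' a')) -
              Real.exp (Q a) / (∑ a', Real.exp (Q a'))) 0 ≤ 1 - Real.exp (-ε) := by
  set S := ∑ a', Real.exp (Q a') with hS
  set S' := ∑ a', Real.exp (Q' a') with hS'
  have hSpos : 0 < S := Finset.sum_pos (fun a _ => Real.exp_pos _) Finset.univ_nonempty
  have hS'pos : 0 < S' := Finset.sum_pos (fun a _ => Real.exp_pos _) Finset.univ_nonempty
  have hε0 : 0 ≤ ε := le_trans (abs_nonneg _) (hle (Classical.arbitrary A))
  have hexp1 : Real.exp (-ε) ≤ 1 := Real.exp_le_one_iff.mpr (by linarith)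
  have key : ∀ a, Real.exp (-ε) * (Real.exp (Q' a) / S') ≤ Real.exp (Q a) / S := by
    intro a
    have h1 : Q' a - ε ≤ Q a := by have := abs_le.mp (hle a); linarith [this.2]
    have h2 : Real.exp (-ε) * Real.exp (Q' a) = Real.exp (Q' a - ε) := by
      rw [← Real.exp_add]; ring_nf
    calc Real.exp (-ε) * (Real.exp (Q' a) / S')
        = Real.exp (Q' a - ε) / S' := by rw [mul_div_assoc'] ; rw [h2]
      _ ≤ Real.exp (Q a) / S' := by gcongr
      _ ≤ Real.exp (Q a) / S := by gcongr
  have hbound : ∀ a, max (Real.exp (Q' a) / S' - Real.exp (Q a) / S) 0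
      ≤ (1 - Real.exp (-ε)) * (Real.exp (Q' a) / S') := by
    intro a
    have hπ' : 0 ≤ Real.exp (Q' a) / S' := div_nonneg (Real.exp_pos _).le hS'pos.le
    apply max_le
    · nlinarith [key a]
    · exact mul_nonneg (by linarith) hπ'
  calc ∑ a, max (Real.exp (Q' a) / S' - Real.exp (Q a) / S) 0
      ≤ ∑ a, (1 - Real.exp (-ε)) * (Real.exp (Q' a) / S') :=
        Finset.sum_le_sum (fun a _ => hbound a)
    _ = (1 - Real.exp (-ε)) * ((∑ a, Real.exp (Q' a)) / S') := by
        rw [← Finset.mul_sum, ← Finset.sum_div]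
    _ = 1 - Real.exp (-ε) := by rw [← hS', div_self hS'pos.ne']; ring

/-- ℓ₁ distance between two softmax distributions is at most 2·√(‖Q - Q'‖_∞). -/
theorem stmt_1 {A : Type*} [Fintype A] [Nonempty A] (Q Q' : A → ℝ) :
    ∑ a, |Real.exp (Q a) / (∑ a', Real.exp (Q a')) -
          Real.exp (Q' a) / (∑ a', Real.exp (Q' a'))| ≤
      2 * Real.sqrt (⨆ a, |Q a - Q' a|) := by
  classical
  set S := ∑ a', Real.exp (Q a') with hS
  set S' := ∑ a', Real.exp (Q' a') with hS'
  have hSpos : 0 < S := Finset.sum_pos (fun a _ => Real.exp_pos _) Finset.univ_nonempty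
  have hS'pos : 0 < S' := Finset.sum_pos (fun a _ => Real.exp_pos _) Finset.univ_nonempty
  set ε := ⨆ a, |Q a - Q' a| with hε
  have hbdd : BddAbove (Set.range fun a => |Q a - Q' a|) :=
    Set.Finite.bddAbove (Set.finite_range _)
  have hle : ∀ a, |Q a - Q' a| ≤ ε := fun a => le_ciSup hbdd a
  have hε0 : 0 ≤ ε := le_trans (abs_nonneg _) (hle (Classical.arbitrary A))
  have hsum : ∑ a, Real.exp (Q a) / S = 1 := by
    rw [← Finset.sum_div, ← hS, div_self hSpos.ne']
  have hsum' : ∑ a, Real.exp (Q' a) / S' = 1 := by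
    rw [← Finset.sum_div, ← hS', div_self hS'pos.ne']
  -- final numeric step: 1 - exp(-ε) ≤ sqrt ε
  have hfin : 1 - Real.exp (-ε) ≤ Real.sqrt ε := by
    rcases le_or_gt 1 ε with h | h
    · have : (1:ℝ) ≤ Real.sqrt ε := by
        rw [show (1:ℝ) = Real.sqrt 1 by simp]; exact Real.sqrt_le_sqrt h
      linarith [Real.exp_pos (-ε)]
    · have h1 : 1 - ε ≤ Real.exp (-ε) := by linarith [Real.add_one_le_exp (-ε)]
      have h2 : ε ≤ Real.sqrt ε := by
        nlinarith [Real.sq_sqrt hε0, Real.sqrt_nonneg ε]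
      linarith
  rcases le_total S S' with hcase | hcase
  · -- use negative part
    have hid : ∑ a, |Real.exp (Q a) / S - Real.exp (Q' a) / S'|
        = 2 * ∑ a, max (Real.exp (Q' a) / S' - Real.exp (Q a) / S) 0 := by
      have : ∀ a, |Real.exp (Q a) / S - Real.exp (Q' a) / S'|
          = 2 * max (Real.exp (Q' a) / S' - Real.exp (Q a) / S) 0
            + (Real.exp (Q a) / S - Real.exp (Q' a) / S') := by
        intro a
        rcases le_total (Real.exp (Q a) / S) (Real.exp (Q' a) / S') with hc | hc
        · rw [abs_of_nonpos (by linarith), max_eq_left (by linarith)]; ring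
        · rw [abs_of_nonneg (by linarith), max_eq_right (by linarith)]; ring
      rw [Finset.sum_congr rfl (fun a _ => this a), Finset.sum_add_distrib,
        Finset.sum_sub_distrib, hsum, hsum', ← Finset.mul_sum]
      ring
    rw [hid]
    have := softmax_one_sided Q Q' ε hle hcase
    calc 2 * ∑ a, max (Real.exp (Q' a) / S' - Real.exp (Q a) / S) 0
        ≤ 2 * (1 - Real.exp (-ε)) := by linarith
      _ ≤ 2 * Real.sqrt ε := by linarith
  · -- use positive part, swap roles
    have hid : ∑ a, |Real.exp (Q a) / S - Real.exp (Q' a) / S'|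
        = 2 * ∑ a, max (Real.exp (Q a) / S - Real.exp (Q' a) / S') 0 := by
      have : ∀ a, |Real.exp (Q a) / S - Real.exp (Q' a) / S'|
          = 2 * max (Real.exp (Q a) / S - Real.exp (Q' a) / S') 0
            - (Real.exp (Q a) / S - Real.exp (Q' a) / S') := by
        intro a
        rcases le_total (Real.exp (Q a) / S) (Real.exp (Q' a) / S') with hc | hc
        · rw [abs_of_nonpos (by linarith), max_eq_right (by linarith)]; ring
        · rw [abs_of_nonneg (by linarith), max_eq_left (by linarith)]; ring
      rw [Finset.sum_congr rfl (fun a _ => this a), Finset.sum_sub_distrib,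
        Finset.sum_sub_distrib, hsum, hsum', ← Finset.mul_sum]
      ring
    rw [hid]
    have hle' : ∀ a, |Q' a - Q a| ≤ ε := fun a => by rw [abs_sub_comm]; exact hle a
    have := softmax_one_sided Q' Q ε hle' hcase
    calc 2 * ∑ a, max (Real.exp (Q a) / S - Real.exp (Q' a) / S') 0
        ≤ 2 * (1 - Real.exp (-ε)) := by linarith
      _ ≤ 2 * Real.sqrt ε := by linarith
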